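/- Bivariate closed form of the empirical quadratic divergence: let P be the empirical joint CDF of points (e_{p,1}, f_{p,1}),...,(e_{p,m}, f_{p,m}) and Q of points (e_{q,1}, f_{q,1}),...,(e_{q,m}, f_{q,m}), with all first coordinates ≤ V_e and second coordinates ≤ V_f. Then ∫∫ (P(x,y) − Q(x,y))² dx dy over (−∞,V_e]×(−∞,V_f] equals (1/m²) Σ_{j1,j2} (V_e − max(e_{p,j1}, e_{p,j2}))(V_f − max(f_{p,j1}, f_{p,j2})) − (2/m²) Σ_{j1,j2} (V_e − max(e_{p,j1}, e_{q,j2}))(V_f − max(f_{p,j1}, f_{q,j2})) + (1/m²) Σ_{j1,j2} (V_e − max(e_{q,j1}, e_{q,j2}))(V_f − max(f_{q,j1}, f_{q,j2})). -/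

import Mathlib

open MeasureTheory Finset

noncomputable def ind (a x : ℝ) : ℝ := if a ≤ x then 1 else 0

lemma ind_mul (a b x : ℝ) : ind a x * ind b x = ind (max a b) x := by
  unfold ind
  by_cases h1 : a ≤ x <;> by_cases h2 : b ≤ x <;> simp [h1, h2, max_le_iff]

lemma ind_pair (a b x y : ℝ) :
    (if a ≤ x ∧ b ≤ y then (1:ℝ) else 0) = ind a x * ind b y := by
  unfold ind
  by_cases h1 : a ≤ x <;> by_cases h2 : b ≤ y <;> simp [h1, h2]

lemma ind_integrableOn (a V : ℝ) : IntegrableOn (ind a) (Set.Iic V) := by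
  have h : Integrable ((Set.Icc a V).indicator fun _ => (1:ℝ)) := by
    rw [integrable_indicator_iff measurableSet_Icc]
    exact integrableOn_const measure_Icc_lt_top.ne
  refine (h.integrableOn).congr_fun ?_ measurableSet_Iic
  intro x hx
  simp only [Set.mem_Iic] at hx
  simp [ind, Set.indicator_apply, Set.mem_Icc, hx]

lemma ind_integral (a V : ℝ) (h : a ≤ V) : ∫ x in Set.Iic V, ind a x = V - a := by
  have : (ind a) = Set.indicator (Set.Ici a) (fun _ => (1:ℝ)) := by
    ext x; simp [ind, Set.indicator_apply]
  rw [this, setIntegral_indicator measurableSet_Ici]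
  rw [Set.inter_comm, Set.Ici_inter_Iic, setIntegral_const, Real.volume_real_Icc_of_le h, smul_eq_mul, mul_one]

lemma ind2_integrable (a b Ve Vf : ℝ) :
    IntegrableOn (fun z : ℝ × ℝ => ind a z.1 * ind b z.2) ((Set.Iic Ve) ×ˢ (Set.Iic Vf)) := by
  unfold IntegrableOn
  rw [Measure.volume_eq_prod, ← Measure.prod_restrict]
  exact (ind_integrableOn a Ve).mul_prod (ind_integrableOn b Vf)

lemma ind2_integral (a b Ve Vf : ℝ) (ha : a ≤ Ve) (hb : b ≤ Vf) :
    ∫ z in (Set.Iic Ve) ×ˢ (Set.Iic Vf), ind a z.1 * ind b z.2 = (Ve - a) * (Vf - b) := by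
  rw [Measure.volume_eq_prod, ← Measure.prod_restrict, integral_prod_mul,
    ind_integral a Ve ha, ind_integral b Vf hb]

lemma ind4_eq (a b c d : ℝ) :
    (fun z : ℝ × ℝ => (ind a z.1 * ind b z.2) * (ind c z.1 * ind d z.2))
      = fun z => ind (max a c) z.1 * ind (max b d) z.2 := by
  funext z
  rw [show (ind a z.1 * ind b z.2) * (ind c z.1 * ind d z.2)
      = (ind a z.1 * ind c z.1) * (ind b z.2 * ind d z.2) from by ring, ind_mul, ind_mul]

lemma ind4_integrable (a b c d Ve Vf : ℝ) :
    IntegrableOn (fun z : ℝ × ℝ => (ind a z.1 * ind b z.2) * (ind c z.1 * ind d z.2))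
      ((Set.Iic Ve) ×ˢ (Set.Iic Vf)) := by
  rw [ind4_eq]; exact ind2_integrable _ _ _ _

lemma ind4_integral (a b c d Ve Vf : ℝ) (ha : a ≤ Ve) (hc : c ≤ Ve) (hb : b ≤ Vf) (hd : d ≤ Vf) :
    ∫ z in (Set.Iic Ve) ×ˢ (Set.Iic Vf),
        (ind a z.1 * ind b z.2) * (ind c z.1 * ind d z.2)
      = (Ve - max a c) * (Vf - max b d) := by
  rw [show (∫ z in (Set.Iic Ve) ×ˢ (Set.Iic Vf),
        (ind a z.1 * ind b z.2) * (ind c z.1 * ind d z.2))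
      = ∫ z in (Set.Iic Ve) ×ˢ (Set.Iic Vf), ind (max a c) z.1 * ind (max b d) z.2 from by
    rw [← ind4_eq]]
  exact ind2_integral _ _ _ _ (max_le ha hc) (max_le hb hd)

theorem empirical_quadratic_divergence_closed_form_bivariate
    (m : ℕ) (hm : 0 < m) (Ve Vf : ℝ)
    (ep fp eq' fq : Fin m → ℝ)
    (hep : ∀ j, ep j ≤ Ve) (heq : ∀ j, eq' j ≤ Ve)
    (hfp : ∀ j, fp j ≤ Vf) (hfq : ∀ j, fq j ≤ Vf)
    (P Q : ℝ → ℝ → ℝ)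
    (hP : ∀ x y, P x y = ((Finset.univ.filter (fun j => ep j ≤ x ∧ fp j ≤ y)).card : ℝ) / m)
    (hQ : ∀ x y, Q x y = ((Finset.univ.filter (fun j => eq' j ≤ x ∧ fq j ≤ y)).card : ℝ) / m) :
    ∫ z in (Set.Iic Ve) ×ˢ (Set.Iic Vf), (P z.1 z.2 - Q z.1 z.2) ^ 2
      = (1 / (m : ℝ) ^ 2) * ∑ j₁, ∑ j₂,
            (Ve - max (ep j₁) (ep j₂)) * (Vf - max (fp j₁) (fp j₂))
        - (2 / (m : ℝ) ^ 2) * ∑ j₁, ∑ j₂,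
            (Ve - max (ep j₁) (eq' j₂)) * (Vf - max (fp j₁) (fq j₂))
        + (1 / (m : ℝ) ^ 2) * ∑ j₁, ∑ j₂,
            (Ve - max (eq' j₁) (eq' j₂)) * (Vf - max (fq j₁) (fq j₂)) := by
  classical
  set S := (Set.Iic Ve) ×ˢ (Set.Iic Vf) with hS
  set c : ℝ := (1 / (m : ℝ)) ^ 2 with hc
  set D : Fin m → ℝ × ℝ → ℝ := fun j z =>
    ind (ep j) z.1 * ind (fp j) z.2 - ind (eq' j) z.1 * ind (fq j) z.2 with hDdef
  -- pointwise rewriting of the integrand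
  have hD : ∀ z : ℝ × ℝ, (P z.1 z.2 - Q z.1 z.2) ^ 2
      = ∑ j₁, ∑ j₂, c * (D j₁ z * D j₂ z) := by
    intro z
    have hPz : P z.1 z.2 = (1 / (m : ℝ)) * ∑ j, ind (ep j) z.1 * ind (fp j) z.2 := by
      rw [hP, Finset.card_filter]
      push_cast
      simp only [ind_pair]
      ring
    have hQz : Q z.1 z.2 = (1 / (m : ℝ)) * ∑ j, ind (eq' j) z.1 * ind (fq j) z.2 := by
      rw [hQ, Finset.card_filter]
      push_cast
      simp only [ind_pair]
      ring
    rw [hPz, hQz, ← mul_sub, ← Finset.sum_sub_distrib, mul_pow, sq (∑ j, D j z),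
      Finset.sum_mul_sum, Finset.mul_sum]
    exact Finset.sum_congr rfl fun j₁ _ => by
      rw [Finset.mul_sum]
  -- integrability of each term
  have hIA : ∀ j k : Fin m, IntegrableOn (fun z : ℝ × ℝ => D j z * D k z) S := by
    intro j k
    have : (fun z : ℝ × ℝ => D j z * D k z)
        = fun z =>
          (((ind (ep j) z.1 * ind (fp j) z.2) * (ind (ep k) z.1 * ind (fp k) z.2)
            - (ind (ep j) z.1 * ind (fp j) z.2) * (ind (eq' k) z.1 * ind (fq k) z.2))
            - (ind (eq' j) z.1 * ind (fq j) z.2) * (ind (ep k) z.1 * ind (fp k) z.2))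
            + (ind (eq' j) z.1 * ind (fq j) z.2) * (ind (eq' k) z.1 * ind (fq k) z.2) := by
      funext z; simp only [hDdef]; ring
    rw [this]
    exact (((ind4_integrable _ _ _ _ _ _).sub (ind4_integrable _ _ _ _ _ _)).sub
      (ind4_integrable _ _ _ _ _ _)).add (ind4_integrable _ _ _ _ _ _)
  -- value of each cross integral
  have key : ∀ j k : Fin m, ∫ z in S, D j z * D k z
      = (Ve - max (ep j) (ep k)) * (Vf - max (fp j) (fp k))
        - (Ve - max (ep j) (eq' k)) * (Vf - max (fp j) (fq k))
        - (Ve - max (eq' j) (ep k)) * (Vf - max (fq j) (fp k))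
        + (Ve - max (eq' j) (eq' k)) * (Vf - max (fq j) (fq k)) := by
    intro j k
    have hfun : ∀ z : ℝ × ℝ, D j z * D k z
        = (((ind (ep j) z.1 * ind (fp j) z.2) * (ind (ep k) z.1 * ind (fp k) z.2)
            - (ind (ep j) z.1 * ind (fp j) z.2) * (ind (eq' k) z.1 * ind (fq k) z.2))
            - (ind (eq' j) z.1 * ind (fq j) z.2) * (ind (ep k) z.1 * ind (fp k) z.2))
            + (ind (eq' j) z.1 * ind (fq j) z.2) * (ind (eq' k) z.1 * ind (fq k) z.2) := by
      intro z; simp only [hDdef]; ring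
    simp only [hfun]
    have hAA : IntegrableOn (fun z : ℝ × ℝ =>
        ind (ep j) z.1 * ind (fp j) z.2 * (ind (ep k) z.1 * ind (fp k) z.2)) S :=
      ind4_integrable _ _ _ _ _ _
    have hAB : IntegrableOn (fun z : ℝ × ℝ =>
        ind (ep j) z.1 * ind (fp j) z.2 * (ind (eq' k) z.1 * ind (fq k) z.2)) S :=
      ind4_integrable _ _ _ _ _ _
    have hBA : IntegrableOn (fun z : ℝ × ℝ =>
        ind (eq' j) z.1 * ind (fq j) z.2 * (ind (ep k) z.1 * ind (fp k) z.2)) S :=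
      ind4_integrable _ _ _ _ _ _
    have hBB : IntegrableOn (fun z : ℝ × ℝ =>
        ind (eq' j) z.1 * ind (fq j) z.2 * (ind (eq' k) z.1 * ind (fq k) z.2)) S :=
      ind4_integrable _ _ _ _ _ _
    have h12 : IntegrableOn (fun z : ℝ × ℝ =>
        ind (ep j) z.1 * ind (fp j) z.2 * (ind (ep k) z.1 * ind (fp k) z.2)
          - ind (ep j) z.1 * ind (fp j) z.2 * (ind (eq' k) z.1 * ind (fq k) z.2)) S :=
      hAA.sub hAB
    have h123 : IntegrableOn (fun z : ℝ × ℝ =>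
        ind (ep j) z.1 * ind (fp j) z.2 * (ind (ep k) z.1 * ind (fp k) z.2)
          - ind (ep j) z.1 * ind (fp j) z.2 * (ind (eq' k) z.1 * ind (fq k) z.2)
          - ind (eq' j) z.1 * ind (fq j) z.2 * (ind (ep k) z.1 * ind (fp k) z.2)) S :=
      h12.sub hBA
    rw [integral_add h123 hBB, integral_sub h12 hBA, integral_sub hAA hAB,
      ind4_integral _ _ _ _ _ _ (hep j) (hep k) (hfp j) (hfp k),
      ind4_integral _ _ _ _ _ _ (hep j) (heq k) (hfp j) (hfq k),
      ind4_integral _ _ _ _ _ _ (heq j) (hep k) (hfq j) (hfp k),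
      ind4_integral _ _ _ _ _ _ (heq j) (heq k) (hfq j) (hfq k)]
  -- move the integral through the sums
  have step1 : ∫ z in S, (P z.1 z.2 - Q z.1 z.2) ^ 2
      = ∑ j₁, ∑ j₂, c * ∫ z in S, D j₁ z * D j₂ z := by
    simp only [hD]
    rw [integral_finset_sum _ (fun j₁ _ => integrable_finset_sum _
      (fun j₂ _ => ((hIA j₁ j₂).const_mul c)))]
    refine Finset.sum_congr rfl fun j₁ _ => ?_
    rw [integral_finset_sum _ (fun j₂ _ => ((hIA j₁ j₂).const_mul c))]
    exact Finset.sum_congr rfl fun j₂ _ => integral_const_mul c _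
  -- symmetry of the cross term
  have hswap : ∑ j₁, ∑ j₂, (Ve - max (eq' j₁) (ep j₂)) * (Vf - max (fq j₁) (fp j₂))
      = ∑ j₁, ∑ j₂, (Ve - max (ep j₁) (eq' j₂)) * (Vf - max (fp j₁) (fq j₂)) := by
    rw [Finset.sum_comm]
    exact Finset.sum_congr rfl fun j₁ _ => Finset.sum_congr rfl fun j₂ _ => by
      rw [max_comm (eq' j₂) (ep j₁), max_comm (fq j₂) (fp j₁)]
  rw [step1]
  simp only [key]
  rw [show (∑ j₁, ∑ j₂, c *
        ((Ve - max (ep j₁) (ep j₂)) * (Vf - max (fp j₁) (fp j₂))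
          - (Ve - max (ep j₁) (eq' j₂)) * (Vf - max (fp j₁) (fq j₂))
          - (Ve - max (eq' j₁) (ep j₂)) * (Vf - max (fq j₁) (fp j₂))
          + (Ve - max (eq' j₁) (eq' j₂)) * (Vf - max (fq j₁) (fq j₂))))
      = c * (∑ j₁, ∑ j₂, (Ve - max (ep j₁) (ep j₂)) * (Vf - max (fp j₁) (fp j₂)))
        - c * (∑ j₁, ∑ j₂, (Ve - max (ep j₁) (eq' j₂)) * (Vf - max (fp j₁) (fq j₂)))
        - c * (∑ j₁, ∑ j₂, (Ve - max (eq' j₁) (ep j₂)) * (Vf - max (fq j₁) (fp j₂)))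
        + c * (∑ j₁, ∑ j₂, (Ve - max (eq' j₁) (eq' j₂)) * (Vf - max (fq j₁) (fq j₂))) from by
    simp only [Finset.mul_sum, mul_sub, mul_add, Finset.sum_sub_distrib,
      Finset.sum_add_distrib]]
  rw [hswap, hc]
  ring
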